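/- arXiv:0808.2013 — 2 statements merged into one kernel-verified Lean document; each statement's English description precedes it below -/
import Mathlib

section
/- Let Q ∈ S^d_{>0} satisfy λ(Q) = 1. If Q is perfect and eutactic, i.e., Q^{-1} = Σ_{x ∈ Min Q} α_x xxᵀ with all α_x > 0 and {xxᵀ : x ∈ Min Q} spans S^d, then Q is a strict local minimum of det on the Ryshkov polyhedron R = {Q' ∈ S^d_{>0} : λ(Q') ≥ 1}: there is a neighborhood U of Q such that every Q' ∈ R ∩ U with Q' ≠ Q satisfies det Q' > det Q. -/
open Matrix

/-- The quadratic form value `xᵀ Q x`. -/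
noncomputable def qf {d : ℕ} (Q : Matrix (Fin d) (Fin d) ℝ) (x : Fin d → ℝ) : ℝ :=
  x ⬝ᵥ Q.mulVec x

/-- Coordinatewise cast of an integer vector to a real vector. -/
noncomputable def intCast {d : ℕ} (x : Fin d → ℤ) : Fin d → ℝ := fun i => (x i : ℝ)

/-- The arithmetical minimum `λ(Q) = inf_{x ∈ ℤ^d \ {0}} xᵀQx`. -/
noncomputable def arithMin {d : ℕ} (Q : Matrix (Fin d) (Fin d) ℝ) : ℝ :=
  sInf {r : ℝ | ∃ x : Fin d → ℤ, x ≠ 0 ∧ r = qf Q (intCast x)}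

/-- The set of minimal vectors `Min Q`. -/
def minVecs {d : ℕ} (Q : Matrix (Fin d) (Fin d) ℝ) : Set (Fin d → ℤ) :=
  {x | x ≠ 0 ∧ qf Q (intCast x) = arithMin Q}

section Aux

attribute [local instance] Matrix.normedAddCommGroup Matrix.normedSpace

variable {d : ℕ}

/-- `det` as a continuous multilinear map in the rows. -/
noncomputable def detCMM (d : ℕ) : ContinuousMultilinearMap ℝ (fun _ : Fin d => (Fin d → ℝ)) ℝ where
  toMultilinearMap := Matrix.detRowAlternating.toMultilinearMap
  cont := by
    have : Continuous fun A : Matrix (Fin d) (Fin d) ℝ => A.det :=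
      Continuous.matrix_det continuous_id
    exact this

lemma hasFDerivAt_det' (Q : Matrix (Fin d) (Fin d) ℝ) :
    HasFDerivAt (fun A : Matrix (Fin d) (Fin d) ℝ => A.det) ((detCMM d).linearDeriv Q) Q := by
  have h := (detCMM d).hasFDerivAt Q
  exact h

lemma linearDeriv_det_apply (Q N : Matrix (Fin d) (Fin d) ℝ) :
    (detCMM d).linearDeriv Q N = Matrix.trace (N * Q.adjugate) := by
  erw [ContinuousMultilinearMap.linearDeriv_apply]
  have h1 : ∀ i, detCMM d (Function.update Q i (N i)) = (Q.updateRow i (N i)).det := fun i => rfl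
  simp_rw [h1, ← Matrix.cramer_transpose_apply, Matrix.cramer_eq_adjugate_mulVec,
    ← Matrix.adjugate_transpose]
  simp [Matrix.trace, Matrix.mulVec, Matrix.mul_apply, Matrix.diag, dotProduct, mul_comm]

lemma qf_sub (A B : Matrix (Fin d) (Fin d) ℝ) (x : Fin d → ℝ) :
    qf (A - B) x = qf A x - qf B x := by
  simp [qf, sub_mulVec, dotProduct_sub]

lemma qf_smul (c : ℝ) (A : Matrix (Fin d) (Fin d) ℝ) (x : Fin d → ℝ) :
    qf (c • A) x = c * qf A x := by
  simp [qf, smul_mulVec, dotProduct_smul]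

lemma qf_eq_sum (A : Matrix (Fin d) (Fin d) ℝ) (x : Fin d → ℝ) :
    qf A x = ∑ i, ∑ j, x i * A i j * x j := by
  simp [qf, dotProduct, Matrix.mulVec, Finset.mul_sum, mul_assoc]

lemma trace_vecMulVec_mul (u : Fin d → ℝ) (N : Matrix (Fin d) (Fin d) ℝ) :
    Matrix.trace (vecMulVec u u * N) = qf N u := by
  rw [qf_eq_sum]
  simp only [Matrix.trace, Matrix.diag, Matrix.mul_apply, vecMulVec_apply]
  rw [Finset.sum_comm]
  exact Finset.sum_congr rfl fun i _ => Finset.sum_congr rfl fun j _ => by ring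

lemma trace_mul_self_eq (N : Matrix (Fin d) (Fin d) ℝ) (hN : N.IsSymm) :
    Matrix.trace (N * N) = ∑ i, ∑ j, (N i j) ^ 2 := by
  simp only [Matrix.trace, Matrix.diag, Matrix.mul_apply]
  refine Finset.sum_congr rfl fun i _ => Finset.sum_congr rfl fun j _ => ?_
  rw [sq, hN.apply i j]

lemma intCast_ne_zero {x : Fin d → ℤ} (hx : x ≠ 0) : intCast x ≠ 0 := by
  intro h
  apply hx
  funext i
  have := congrFun h i
  simpa [intCast] using this

lemma arithMin_le (Q : Matrix (Fin d) (Fin d) ℝ) (hQ : Q.PosDef) {x : Fin d → ℤ} (hx : x ≠ 0) :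
    arithMin Q ≤ qf Q (intCast x) := by
  apply csInf_le
  · refine ⟨0, ?_⟩
    rintro r ⟨y, hy, rfl⟩
    have h := hQ.dotProduct_mulVec_pos (intCast_ne_zero hy)
    have : (0:ℝ) < intCast y ⬝ᵥ Q.mulVec (intCast y) := by simpa using h
    exact le_of_lt this
  · exact ⟨x, hx, rfl⟩

lemma posDef_isSymm {Q : Matrix (Fin d) (Fin d) ℝ} (hQ : Q.PosDef) : Q.IsSymm := by
  have h := hQ.1
  rw [Matrix.IsHermitian] at h
  rw [Matrix.IsSymm]
  nth_rewrite 2 [← h]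
  ext i j
  simp [Matrix.conjTranspose_apply]

lemma continuous_qf (v : Fin d → ℝ) :
    Continuous fun N : Matrix (Fin d) (Fin d) ℝ => qf N v := by
  have : (fun N : Matrix (Fin d) (Fin d) ℝ => qf N v)
      = fun N => ∑ i, ∑ j, v i * N i j * v j := funext fun N => qf_eq_sum N v
  rw [this]
  refine continuous_finset_sum _ fun i _ => continuous_finset_sum _ fun j _ => ?_
  have hentry : Continuous fun N : Matrix (Fin d) (Fin d) ℝ => N i j :=
    (continuous_apply j).comp (continuous_apply i)
  exact (continuous_const.mul hentry).mul continuous_const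

end Aux

attribute [local instance] Matrix.normedAddCommGroup Matrix.normedSpace

/-- A perfect and eutactic form is a strict local minimum of the determinant on
the Ryshkov polyhedron (one direction of Voronoi's theorem). -/
theorem stmt10 (d : ℕ) (hd : 0 < d) (Q : Matrix (Fin d) (Fin d) ℝ) (hQ : Q.PosDef)
    (hlam : arithMin Q = 1) (hfin : (minVecs Q).Finite)
    (α : (Fin d → ℤ) → ℝ) (hα : ∀ x ∈ minVecs Q, 0 < α x)
    (heut : Q⁻¹ = ∑ x ∈ hfin.toFinset, α x • vecMulVec (intCast x) (intCast x))
    (hperf : ∀ A : Matrix (Fin d) (Fin d) ℝ, A.IsSymm →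
      A ∈ Submodule.span ℝ
        ((fun x : Fin d → ℤ => vecMulVec (intCast x) (intCast x)) '' minVecs Q)) :
    ∃ U ∈ nhds Q, ∀ Q' ∈ U, Matrix.PosDef Q' → 1 ≤ arithMin Q' → Q' ≠ Q →
      Q.det < Matrix.det Q' := by
  classical
  -- the trace functional
  set f : Matrix (Fin d) (Fin d) ℝ → ℝ := fun N => Matrix.trace (Q⁻¹ * N) with hf
  have hfcont : Continuous f := (continuous_const.matrix_mul continuous_id).matrix_trace
  -- trace of Q⁻¹ * N via eutaxy
  have htr : ∀ N : Matrix (Fin d) (Fin d) ℝ,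
      f N = ∑ x ∈ hfin.toFinset, α x * qf N (intCast x) := by
    intro N
    rw [hf]
    simp only
    rw [heut, Finset.sum_mul, Matrix.trace_sum]
    exact Finset.sum_congr rfl fun x _ => by
      rw [Matrix.smul_mul, Matrix.trace_smul, smul_eq_mul, trace_vecMulVec_mul]
  -- key positivity via eutaxy + perfection
  have keypos : ∀ N : Matrix (Fin d) (Fin d) ℝ, N.IsSymm →
      (∀ x ∈ minVecs Q, 0 ≤ qf N (intCast x)) → N ≠ 0 → 0 < f N := by
    intro N hsymm hpos hne
    have hterms : ∀ x ∈ hfin.toFinset, 0 ≤ α x * qf N (intCast x) := by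
      intro x hx
      rw [Set.Finite.mem_toFinset] at hx
      exact mul_nonneg (hα x hx).le (hpos x hx)
    have hge : 0 ≤ f N := by
      rw [htr N]; exact Finset.sum_nonneg hterms
    rcases hge.lt_or_eq with h | h
    · exact h
    · exfalso
      have hsum0 : ∑ x ∈ hfin.toFinset, α x * qf N (intCast x) = 0 := by
        rw [← htr N, ← h]
      have hzero : ∀ x ∈ minVecs Q, qf N (intCast x) = 0 := by
        intro x hx
        have hx' : x ∈ hfin.toFinset := (Set.Finite.mem_toFinset hfin).mpr hx
        have := (Finset.sum_eq_zero_iff_of_nonneg hterms).mp hsum0 x hx'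
        have hαx := hα x hx
        exact by
          rcases mul_eq_zero.mp this with h' | h'
          · exact absurd h' hαx.ne'
          · exact h'
      -- span induction: trace (N * N) = 0
      have hmem := hperf N hsymm
      have htrNN : Matrix.trace (N * N) = 0 := by
        refine Submodule.span_induction
          (p := fun M _ => Matrix.trace (M * N) = 0) ?_ ?_ ?_ ?_ hmem
        · rintro M ⟨x, hx, rfl⟩
          rw [trace_vecMulVec_mul]
          exact hzero x hx
        · simp
        · intro a b _ _ ha hb
          rw [Matrix.add_mul, Matrix.trace_add, ha, hb, add_zero]
        · intro c a _ ha
          rw [Matrix.smul_mul, Matrix.trace_smul, ha, smul_zero]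
      rw [trace_mul_self_eq N hsymm] at htrNN
      have hNij : ∀ i j, N i j = 0 := by
        intro i j
        have h1 : ∀ i ∈ (Finset.univ : Finset (Fin d)), 0 ≤ ∑ j, (N i j) ^ 2 :=
          fun i _ => Finset.sum_nonneg fun j _ => sq_nonneg _
        have h2 := (Finset.sum_eq_zero_iff_of_nonneg h1).mp htrNN i (Finset.mem_univ i)
        have h3 := (Finset.sum_eq_zero_iff_of_nonneg
          (fun j _ => sq_nonneg (N i j))).mp h2 j (Finset.mem_univ j)
        have h4 : (N i j) ^ 2 = 0 := h3
        exact pow_eq_zero_iff two_ne_zero |>.mp h4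
      exact hne (by ext i j; simpa using hNij i j)
  -- the compact set S
  set S : Set (Matrix (Fin d) (Fin d) ℝ) :=
    {N | (N.IsSymm ∧ ∀ x ∈ minVecs Q, 0 ≤ qf N (intCast x)) ∧ ‖N‖ = 1} with hS
  have hSsub : S ⊆ Metric.sphere 0 1 := by
    intro N hN
    simpa [Metric.mem_sphere, dist_zero_right] using hN.2
  have hSclosed : IsClosed S := by
    have h1 : IsClosed {N : Matrix (Fin d) (Fin d) ℝ | Nᵀ = N} :=
      isClosed_eq (Continuous.matrix_transpose continuous_id) continuous_id
    have h2 : IsClosed {N : Matrix (Fin d) (Fin d) ℝ | ∀ x ∈ minVecs Q, 0 ≤ qf N (intCast x)} := by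
      have he : {N : Matrix (Fin d) (Fin d) ℝ | ∀ x ∈ minVecs Q, 0 ≤ qf N (intCast x)}
          = ⋂ x ∈ minVecs Q, {N | 0 ≤ qf N (intCast x)} := by
        ext N; simp [Set.mem_iInter]
      rw [he]
      exact isClosed_biInter fun x _ => isClosed_le continuous_const (continuous_qf _)
    have h3 : IsClosed {N : Matrix (Fin d) (Fin d) ℝ | ‖N‖ = 1} := by
      have he : {N : Matrix (Fin d) (Fin d) ℝ | ‖N‖ = 1} = Metric.sphere 0 1 := by
        ext N; simp [Metric.mem_sphere, dist_zero_right]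
      rw [he]
      exact Metric.isClosed_sphere
    have hrepr : S = ({N : Matrix (Fin d) (Fin d) ℝ | Nᵀ = N}
        ∩ {N | ∀ x ∈ minVecs Q, 0 ≤ qf N (intCast x)}) ∩ {N | ‖N‖ = 1} := rfl
    rw [hrepr]
    exact (h1.inter h2).inter h3
  have hScompact : IsCompact S :=
    IsCompact.of_isClosed_subset (isCompact_sphere 0 1) hSclosed hSsub
  -- membership helper
  have memS : ∀ Q' : Matrix (Fin d) (Fin d) ℝ, Q'.PosDef → 1 ≤ arithMin Q' → Q' ≠ Q →
      0 < ‖Q' - Q‖ ∧ (‖Q' - Q‖⁻¹ • (Q' - Q)) ∈ S := by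
    intro Q' hQ'pd hQ'lam hne
    set N := Q' - Q with hN
    have hNne : N ≠ 0 := sub_ne_zero.mpr hne
    have hnorm : 0 < ‖N‖ := norm_pos_iff.mpr hNne
    have hNsymm : N.IsSymm := by
      rw [Matrix.IsSymm, hN, Matrix.transpose_sub,
        (posDef_isSymm hQ'pd).eq, (posDef_isSymm hQ).eq]
    have hNpos : ∀ x ∈ minVecs Q, 0 ≤ qf N (intCast x) := by
      intro x hx
      rw [hN, qf_sub]
      have h1 : qf Q (intCast x) = 1 := hx.2.trans hlam
      have h2 : (1:ℝ) ≤ qf Q' (intCast x) :=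
        le_trans hQ'lam (arithMin_le Q' hQ'pd hx.1)
      linarith
    refine ⟨hnorm, ⟨⟨?_, ?_⟩, ?_⟩⟩
    · rw [Matrix.IsSymm, Matrix.transpose_smul, hNsymm.eq]
    · intro x hx
      rw [qf_smul]
      exact mul_nonneg (inv_nonneg.mpr hnorm.le) (hNpos x hx)
    · rw [norm_smul, norm_inv, norm_norm, inv_mul_cancel₀ hnorm.ne']
  by_cases hSne : S.Nonempty
  · -- main case: minimize f on S
    obtain ⟨N₀, hN₀S, hminOn⟩ := hScompact.exists_isMinOn hSne hfcont.continuousOn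
    set c : ℝ := f N₀ with hc
    have hN₀ne : N₀ ≠ 0 := by
      intro h
      have := hN₀S.2
      rw [h, norm_zero] at this
      exact one_ne_zero this.symm
    have hcpos : 0 < c := keypos N₀ hN₀S.1.1 hN₀S.1.2 hN₀ne
    have hdet : 0 < Q.det := hQ.det_pos
    set ε : ℝ := Q.det * c / 2 with hε
    have hεpos : 0 < ε := by positivity
    set L := (detCMM d).linearDeriv Q with hL
    have hDeriv := hasFDerivAt_det' Q
    have hU := (HasFDerivAt.isLittleO hDeriv).def hεpos
    refine ⟨{Q' | ‖Matrix.det Q' - Q.det - L (Q' - Q)‖ ≤ ε * ‖Q' - Q‖}, hU, ?_⟩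
    intro Q' hQ'U hQ'pd hQ'lam hne
    obtain ⟨hnorm, huS⟩ := memS Q' hQ'pd hQ'lam hne
    set N := Q' - Q with hN
    -- f N ≥ c * ‖N‖
    have hfu : c ≤ f (‖N‖⁻¹ • N) := hminOn huS
    have hfsm : f (‖N‖⁻¹ • N) = ‖N‖⁻¹ * f N := by
      rw [hf]; simp only
      rw [Matrix.mul_smul, Matrix.trace_smul, smul_eq_mul]
    have htrN : c * ‖N‖ ≤ f N := by
      rw [hfsm] at hfu
      have := mul_le_mul_of_nonneg_left hfu hnorm.le
      rw [← mul_assoc, mul_inv_cancel₀ hnorm.ne', one_mul] at this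
      linarith [this]
    -- L N = det Q * f N
    have hadj : Q.adjugate = Q.det • Q⁻¹ := by
      rw [Matrix.inv_def, smul_smul, Ring.inverse_eq_inv, mul_inv_cancel₀ hdet.ne', one_smul]
    have hLN : L N = Q.det * f N := by
      rw [hL, linearDeriv_det_apply, Matrix.trace_mul_comm, hadj, Matrix.smul_mul,
        Matrix.trace_smul, smul_eq_mul, hf]
    have hLge : Q.det * (c * ‖N‖) ≤ L N := by
      rw [hLN]
      exact mul_le_mul_of_nonneg_left htrN hdet.le
    -- the little-o bound
    have hb : ‖Matrix.det Q' - Q.det - L N‖ ≤ ε * ‖N‖ := hQ'U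
    rw [Real.norm_eq_abs] at hb
    have hlow : -(ε * ‖N‖) ≤ Matrix.det Q' - Q.det - L N := (abs_le.mp hb).1
    have h1 : Q.det * (c * ‖N‖) = 2 * (ε * ‖N‖) := by
      rw [hε]; ring
    have h2 : 0 < ε * ‖N‖ := mul_pos hεpos hnorm
    linarith [hLge, hlow, h1, h2]
  · -- degenerate case: the Ryshkov polyhedron has no other point at all
    refine ⟨Set.univ, Filter.univ_mem, ?_⟩
    intro Q' _ hQ'pd hQ'lam hne
    exact absurd ⟨_, (memS Q' hQ'pd hQ'lam hne).2⟩ hSne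
end

section
/- Let Q ∈ S^d_{>0} be eutactic, i.e., Q^{-1} = Σ_{x ∈ Min Q} α_x xxᵀ with all α_x > 0, and suppose λ(Q) = 1. Then taking the trace inner product with any Q' in the Ryshkov polyhedron R = {Q' ∈ S^d_{>0} : λ(Q') ≥ 1} gives ⟨Q^{-1}, Q'⟩ ≥ ⟨Q^{-1}, Q⟩ = d; i.e., Q minimizes the linear functional Q' ↦ trace(Q^{-1}Q') over R. -/
open Matrix

lemma trace_vecMulVec_mul_s19 {d : ℕ} (u : Fin d → ℝ) (M : Matrix (Fin d) (Fin d) ℝ)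
    (hM : Mᵀ = M) : (vecMulVec u u * M).trace = u ⬝ᵥ M.mulVec u := by
  simp only [trace, diag, mul_apply, vecMulVec_apply, dotProduct, mulVec]
  rw [Finset.sum_comm]
  refine Finset.sum_congr rfl fun i _ => ?_
  rw [Finset.mul_sum]
  refine Finset.sum_congr rfl fun j _ => ?_
  ring

lemma nonzero_cast {d : ℕ} {x : Fin d → ℤ} (hx : x ≠ 0) : intCast x ≠ 0 := by
  intro h
  apply hx
  funext i
  have := congrFun h i
  simpa [intCast] using this

/-- A eutactic form with arithmetical minimum 1 minimizes the linear functional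
Q' ↦ trace (Q⁻¹ Q') over the Ryshkov polyhedron, with value d at Q. -/
theorem stmt19 (d : ℕ) (hd : 0 < d) (Q : Matrix (Fin d) (Fin d) ℝ) (hQ : Q.PosDef)
    (hlam : arithMin Q = 1) (hfin : (minVecs Q).Finite)
    (α : (Fin d → ℤ) → ℝ) (hα : ∀ x ∈ minVecs Q, 0 < α x)
    (heut : Q⁻¹ = ∑ x ∈ hfin.toFinset, α x • vecMulVec (intCast x) (intCast x)) :
    (Q⁻¹ * Q).trace = (d : ℝ) ∧
    ∀ Q' : Matrix (Fin d) (Fin d) ℝ, Matrix.PosDef Q' → 1 ≤ arithMin Q' →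
      (d : ℝ) ≤ (Q⁻¹ * Q').trace := by
  have hdet : IsUnit Q.det := isUnit_iff_ne_zero.mpr (ne_of_gt hQ.det_pos)
  have hinv : Q⁻¹ * Q = 1 := nonsing_inv_mul Q hdet
  have htr1 : (Q⁻¹ * Q).trace = (d : ℝ) := by
    rw [hinv, trace_one]; simp
  have key : ∀ (M : Matrix (Fin d) (Fin d) ℝ), Mᵀ = M →
      (Q⁻¹ * M).trace = ∑ x ∈ hfin.toFinset, α x * qf M (intCast x) := by
    intro M hM
    rw [heut, Finset.sum_mul, trace_sum]
    refine Finset.sum_congr rfl fun x hx => ?_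
    rw [smul_mul_assoc, trace_smul, smul_eq_mul, trace_vecMulVec_mul_s19 _ _ hM]
    rfl
  have hQt : Qᵀ = Q := by
    have := hQ.isHermitian
    simpa [Matrix.IsHermitian, Matrix.conjTranspose_eq_transpose_of_trivial] using this
  have hsum : ∑ x ∈ hfin.toFinset, α x = (d : ℝ) := by
    rw [← htr1, key Q hQt]
    refine Finset.sum_congr rfl fun x hx => ?_
    have hxm : x ∈ minVecs Q := hfin.mem_toFinset.mp hx
    rw [hxm.2, hlam, mul_one]
  refine ⟨htr1, fun Q' hQ' hmin => ?_⟩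
  have hQ't : Q'ᵀ = Q' := by
    have := hQ'.isHermitian
    simpa [Matrix.IsHermitian, Matrix.conjTranspose_eq_transpose_of_trivial] using this
  rw [key Q' hQ't, ← hsum]
  refine Finset.sum_le_sum fun x hx => ?_
  have hxm : x ∈ minVecs Q := hfin.mem_toFinset.mp hx
  have h1 : 1 ≤ qf Q' (intCast x) := by
    refine le_trans hmin ?_
    apply csInf_le
    · refine ⟨0, fun r hr => ?_⟩
      obtain ⟨y, hy, rfl⟩ := hr
      simpa [qf] using hQ'.posSemidef.dotProduct_mulVec_nonneg (intCast y)
    · exact ⟨x, hxm.1, rfl⟩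
  calc α x = α x * 1 := (mul_one _).symm
    _ ≤ α x * qf Q' (intCast x) :=
      mul_le_mul_of_nonneg_left h1 (le_of_lt (hα x hxm))
end
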